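/- Let m ≥ 1, let X be a locally path-connected and simply connected topological space, and let φ : X → M_m(ℂ) be a continuous map into the space of complex m×m matrices such that for every s ∈ X, φ(s) is symmetric and det(φ(s)^{(k)}) ≠ 0 for every k = 1, …, m. Then there exists a continuous map B : X → M_m(ℂ) such that for every s ∈ X, B(s) is lower triangular and φ(s) = B(s) · B(s)ᵀ. -/

import Mathlib

open Matrix Complex Metric

private lemma aux_const_of_exp_eq_one {A : Type*} [TopologicalSpace A] [PreconnectedSpace A]
    {u : A → ℂ} (hu : Continuous u) (h1 : ∀ a, Complex.exp (u a) = 1) (a b : A) : u a = u b := by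
  have hpi : (0:ℝ) < 2 * Real.pi := by positivity
  have key : ∀ c : A, ∃ n : ℤ, u c = n * (2 * Real.pi * Complex.I) := by
    intro c
    rcases Complex.exp_eq_one_iff.mp (h1 c) with ⟨n, hn⟩
    exact ⟨n, by simpa using hn⟩
  set r : A → ℝ := fun c => (u c).im / (2 * Real.pi) with hr
  have hrint : ∀ c : A, ∃ n : ℤ, r c = n := by
    intro c
    rcases key c with ⟨n, hn⟩
    refine ⟨n, ?_⟩
    have : (u c).im = n * (2 * Real.pi) := by
      rw [hn]; simp [Complex.mul_im, Complex.mul_re]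
    rw [hr]; simp only [this]; field_simp
  have hrc : Continuous r := (Complex.continuous_im.comp hu).div_const _
  -- the image of r is preconnected hence ordConnected, but consists of integers
  have him : IsPreconnected (r '' Set.univ) :=
    (isPreconnected_univ).image r hrc.continuousOn
  have hoc : Set.OrdConnected (r '' Set.univ) := him.ordConnected
  have hreq : ∀ c d : A, r c = r d := by
    have main : ∀ c d : A, r c ≤ r d → r c = r d := by
      intro c d hle
      by_contra hne
      have hlt : r c < r d := lt_of_le_of_ne hle hne
      rcases hrint c with ⟨n, hn⟩
      rcases hrint d with ⟨p, hp⟩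
      have hnp : n < p := by
        have := hlt; rw [hn, hp] at this; exact_mod_cast this
      have hmid : r c + 1/2 ∈ Set.Icc (r c) (r d) := by
        constructor
        · linarith
        · rw [hn, hp]
          have : (n:ℝ) + 1 ≤ p := by exact_mod_cast hnp
          linarith
      have := hoc.out ⟨c, Set.mem_univ c, rfl⟩ ⟨d, Set.mem_univ d, rfl⟩ hmid
      rcases this with ⟨e, -, he⟩
      rcases hrint e with ⟨k, hk⟩
      rw [hk, hn] at he
      have : (2*k : ℝ) = 2*n + 1 := by linarith
      have : (2*k : ℤ) = 2*n + 1 := by exact_mod_cast this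
      omega
    intro c d
    rcases le_total (r c) (r d) with h | h
    · exact main c d h
    · exact (main d c h).symm
  rcases key a with ⟨n, hn⟩
  rcases key b with ⟨p, hp⟩
  have : (n:ℝ) = p := by
    have h2 := hreq a b
    rw [hr] at h2
    simp only at h2
    have hia : (u a).im = n * (2*Real.pi) := by rw [hn]; simp [Complex.mul_im]
    have hib : (u b).im = p * (2*Real.pi) := by rw [hp]; simp [Complex.mul_im]
    rw [hia, hib] at h2
    field_simp at h2
    exact_mod_cast h2
  have : (n:ℤ) = p := by exact_mod_cast this
  rw [hn, hp, this]

private lemma aux_lift_convex {E : Type*} [NormedAddCommGroup E] [NormedSpace ℝ E] {s : Set E}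
    (hconv : Convex ℝ s) (hcomp : IsCompact s) {F : E → ℂ} (hF : ContinuousOn F s)
    (h0 : ∀ x ∈ s, F x ≠ 0) :
    ∃ G : E → ℂ, ContinuousOn G s ∧ ∀ x ∈ s, Complex.exp (G x) = F x := by
  rcases s.eq_empty_or_nonempty with hs | ⟨x₀, hx₀⟩
  · exact ⟨0, by simp [hs], by simp [hs]⟩
  obtain ⟨z, hzs, hz⟩ := hcomp.exists_isMinOn ⟨x₀, hx₀⟩ (continuous_norm.comp_continuousOn hF)
  set ε := ‖F z‖ with hεdef
  have hε : 0 < ε := norm_pos_iff.mpr (h0 z hzs)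
  have hεle : ∀ x ∈ s, ε ≤ ‖F x‖ := fun x hx => isMinOn_iff.mp hz x hx
  have huc := hcomp.uniformContinuousOn_of_continuous hF
  rw [Metric.uniformContinuousOn_iff] at huc
  obtain ⟨δ, hδ, hδ'⟩ := huc ε hε
  obtain ⟨D, hD⟩ := hcomp.isBounded.subset_closedBall x₀
  set D' : ℝ := max D 1 with hD'def
  have hD'pos : (0:ℝ) < D' := lt_of_lt_of_le one_pos (le_max_right _ _)
  set δ₀ : ℝ := δ / (2 * D') with hδ₀def
  have hδ₀pos : 0 < δ₀ := by positivity
  set ρ : ℝ → E → E := fun r x => x₀ + r • (x - x₀) with hρdef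
  have hmem : ∀ r ∈ Set.Icc (0:ℝ) 1, ∀ x ∈ s, ρ r x ∈ s := by
    intro r hr x hx
    have : ρ r x = (1 - r) • x₀ + r • x := by
      simp only [hρdef]; module
    rw [this]
    exact hconv hx₀ hx (by linarith [hr.2]) hr.1 (by ring)
  have hρcont : ∀ r : ℝ, Continuous (ρ r) := fun r =>
    continuous_const.add ((continuous_id.sub continuous_const).const_smul r)
  set P : ℝ → Prop := fun r =>
    ∃ G : E → ℂ, ContinuousOn G s ∧ ∀ x ∈ s, Complex.exp (G x) = F (ρ r x) with hPdef
  have hFρ : ∀ r ∈ Set.Icc (0:ℝ) 1, ContinuousOn (fun x => F (ρ r x)) s := by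
    intro r hr
    exact hF.comp (hρcont r).continuousOn (fun x hx => hmem r hr x hx)
  have step : ∀ r ∈ Set.Icc (0:ℝ) 1, ∀ r' ∈ Set.Icc (0:ℝ) 1, |r' - r| ≤ δ₀ → P r → P r' := by
    intro r hr r' hr' hrr' ⟨G, hGc, hGe⟩
    have hclose : ∀ x ∈ s, dist (ρ r' x) (ρ r x) < δ := by
      intro x hx
      have h1 : dist (ρ r' x) (ρ r x) = |r' - r| * ‖x - x₀‖ := by
        rw [dist_eq_norm]
        simp only [hρdef]
        rw [show x₀ + r' • (x - x₀) - (x₀ + r • (x - x₀)) = (r' - r) • (x - x₀) by module]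
        rw [norm_smul, Real.norm_eq_abs]
      have h2 : ‖x - x₀‖ ≤ D' := by
        have := hD hx
        rw [mem_closedBall, dist_eq_norm] at this
        exact this.trans (le_max_left _ _)
      calc dist (ρ r' x) (ρ r x) = |r' - r| * ‖x - x₀‖ := h1
        _ ≤ δ₀ * D' := mul_le_mul hrr' h2 (norm_nonneg _) hδ₀pos.le
        _ = δ / 2 := by rw [hδ₀def]; field_simp
        _ < δ := by linarith
    have hratio : ∀ x ∈ s, ‖F (ρ r' x) / F (ρ r x) - 1‖ < 1 := by
      intro x hx
      have hne : F (ρ r x) ≠ 0 := h0 _ (hmem r hr x hx)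
      rw [div_sub_one hne, norm_div]
      rw [div_lt_one (norm_pos_iff.mpr hne)]
      have := hδ' _ (hmem r' hr' x hx) _ (hmem r hr x hx) (hclose x hx)
      rw [dist_eq_norm] at this
      exact lt_of_lt_of_le this (hεle _ (hmem r hr x hx))
    have hslit : ∀ x ∈ s, F (ρ r' x) / F (ρ r x) ∈ Complex.slitPlane := by
      intro x hx
      apply Complex.ball_one_subset_slitPlane
      rw [mem_ball_iff_norm]
      exact hratio x hx
    refine ⟨fun x => G x + Complex.log (F (ρ r' x) / F (ρ r x)), ?_, ?_⟩
    · exact hGc.add (ContinuousOn.clog ((hFρ r' hr').div (hFρ r hr)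
        (fun x hx => h0 _ (hmem r hr x hx))) hslit)
    · intro x hx
      rw [Complex.exp_add, hGe x hx, Complex.exp_log
        (div_ne_zero (h0 _ (hmem r' hr' x hx)) (h0 _ (hmem r hr x hx)))]
      rw [mul_comm, div_mul_cancel₀ _ (h0 _ (hmem r hr x hx))]
  have hmin_mem : ∀ n : ℕ, min 1 (n * δ₀) ∈ Set.Icc (0:ℝ) 1 :=
    fun n => ⟨le_min zero_le_one (by positivity), min_le_left _ _⟩
  have Hn : ∀ n : ℕ, P (min 1 (n * δ₀)) := by
    intro n
    induction n with
    | zero =>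
      refine ⟨fun _ => Complex.log (F x₀), continuousOn_const, fun x hx => ?_⟩
      rw [Complex.exp_log (h0 x₀ hx₀)]
      simp [hρdef]
    | succ n ih =>
      refine step _ (hmin_mem n) _ (hmin_mem (n+1)) ?_ ih
      have hmono : (n:ℝ) * δ₀ ≤ (n+1 : ℕ) * δ₀ := by
        have : (n:ℝ) ≤ (n+1:ℕ) := by exact_mod_cast Nat.le_succ n
        nlinarith
      have hle : min 1 ((n:ℝ) * δ₀) ≤ min 1 ((n+1:ℕ) * δ₀) :=
        min_le_min le_rfl hmono
      rw [_root_.abs_of_nonneg (by linarith : (0:ℝ) ≤ _)]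
      rcases le_total 1 ((n:ℝ) * δ₀) with h | h
      · rw [min_eq_left h, min_eq_left (by push_cast; nlinarith)]
        linarith
      · rw [min_eq_right h]
        have : min 1 ((n+1:ℕ) * δ₀) ≤ ((n+1:ℕ):ℝ) * δ₀ := min_le_right _ _
        push_cast at this ⊢
        nlinarith
  obtain ⟨n, hn⟩ := exists_nat_ge (1 / δ₀)
  have h1le : (1:ℝ) ≤ n * δ₀ := by
    rw [div_le_iff₀ hδ₀pos] at hn
    linarith
  have := Hn n
  rw [min_eq_left h1le] at this
  obtain ⟨G, hGc, hGe⟩ := this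
  refine ⟨G, hGc, fun x hx => ?_⟩
  rw [hGe x hx]
  simp [hρdef]

private lemma aux_trans_extend {Y : Type*} [TopologicalSpace Y] {a b c : Y}
    (γ : Path a b) (σ : Path b c) (t : ℝ) :
    (γ.trans σ).extend t = if t ≤ 1/2 then γ.extend (2*t) else σ.extend (2*t-1) := by
  split_ifs with h
  · rcases le_total t 0 with h0 | h0
    · rw [Path.extend_of_le_zero _ h0, Path.extend_of_le_zero _ (by linarith)]
    · rw [Path.extend_apply _ ⟨h0, by linarith⟩,
        Path.extend_apply _ ⟨by linarith, by linarith⟩]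
      rw [Path.trans_apply]
      split_ifs with h2
      · rfl
      · exact absurd h h2
  · push_neg at h
    rcases le_total 1 t with h1 | h1
    · rw [Path.extend_of_one_le _ h1, Path.extend_of_one_le _ (by linarith)]
    · rw [Path.extend_apply _ ⟨by linarith, h1⟩,
        Path.extend_apply _ ⟨by linarith, by linarith⟩]
      rw [Path.trans_apply]
      split_ifs with h2
      · exact absurd h2 (not_le.mpr h)
      · rfl

private lemma aux_clamp_mem (t : ℝ) : max 0 (min 1 t) ∈ Set.Icc (0:ℝ) 1 :=
  ⟨le_max_left _ _, max_le zero_le_one (min_le_left _ _)⟩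

private lemma aux_clamp_proj (t : ℝ) :
    Set.projIcc (0:ℝ) 1 zero_le_one (max 0 (min 1 t)) = Set.projIcc 0 1 zero_le_one t := by
  apply Subtype.ext
  show max 0 (min 1 (max 0 (min 1 t))) = max 0 (min 1 t)
  rw [min_eq_right (aux_clamp_mem t).2, max_eq_right (aux_clamp_mem t).1]

private lemma aux_exists_exp_eq {X : Type*} [TopologicalSpace X] [LocallyPathConnectedSpace X]
    [SimplyConnectedSpace X] {f : X → ℂ} (hf : Continuous f) (h0 : ∀ x, f x ≠ 0) :
    ∃ g : X → ℂ, Continuous g ∧ ∀ x, Complex.exp (g x) = f x := by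
  have hproj : ∀ {a b : X} (γ : Path a b) (t : ℝ),
      γ.extend t = γ (Set.projIcc 0 1 zero_le_one t) := fun γ t => rfl
  -- existence of continuous lifts along paths
  have hex : ∀ (a b : X) (γ : Path a b), ∃ G : ℝ → ℂ, Continuous G ∧
      ∀ t, Complex.exp (G t) = f (γ.extend t) := by
    intro a b γ
    obtain ⟨G₀, hG₀c, hG₀e⟩ := aux_lift_convex (convex_Icc (0:ℝ) 1) isCompact_Icc
      (hf.comp γ.continuous_extend).continuousOn (fun t _ => h0 _)
    refine ⟨fun t => G₀ (max 0 (min 1 t)), ?_, ?_⟩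
    · exact hG₀c.comp_continuous
        (continuous_const.max (continuous_const.min continuous_id)) aux_clamp_mem
    · intro t
      rw [hG₀e _ (aux_clamp_mem t)]
      show f (γ.extend (max 0 (min 1 t))) = f (γ.extend t)
      rw [hproj γ (max 0 (min 1 t)), aux_clamp_proj, ← hproj]
  choose L hLc hLe using hex
  -- constancy of exp-constant functions
  have hconst : ∀ (u : ℝ → ℂ), Continuous u → (∀ t t', Complex.exp (u t) = Complex.exp (u t')) →
      ∀ t t', u t = u t' := by
    intro u hu h t t'
    have h1 : ∀ r, Complex.exp (u r - u t') = 1 := fun r => by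
      rw [Complex.exp_sub, h r t', div_self (Complex.exp_ne_zero _)]
    have := aux_const_of_exp_eq_one (u := fun r => u r - u t') (hu.sub continuous_const) h1 t t'
    simpa [sub_eq_sub_iff_sub_eq_sub] using sub_eq_zero.mp (by linear_combination this)
  have hdiff : ∀ (G G' : ℝ → ℂ), Continuous G → Continuous G' →
      (∀ t, Complex.exp (G t) = Complex.exp (G' t)) → G 1 - G 0 = G' 1 - G' 0 := by
    intro G G' hG hG' h
    have := hconst (fun t => G t - G' t) (hG.sub hG')
      (fun t t' => by rw [Complex.exp_sub, Complex.exp_sub, h t, h t',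
        div_self (Complex.exp_ne_zero _), div_self (Complex.exp_ne_zero _)]) 1 0
    linear_combination this
  -- homotopy invariance of lift increments
  have hinv : ∀ (a b : X) (p q : Path a b), p.Homotopic q →
      ∀ (P Q : ℝ → ℂ), Continuous P → Continuous Q →
      (∀ t, Complex.exp (P t) = f (p.extend t)) →
      (∀ t, Complex.exp (Q t) = f (q.extend t)) →
      P 1 - P 0 = Q 1 - Q 0 := by
    intro a b p q hpq P Q hPc hQc hPe hQe
    obtain ⟨H⟩ := hpq
    have hpr0 : Set.projIcc (0:ℝ) 1 zero_le_one 0 = 0 := by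
      apply Subtype.ext
      show max 0 (min 1 0) = 0
      norm_num
    have hpr1 : Set.projIcc (0:ℝ) 1 zero_le_one 1 = 1 := by
      apply Subtype.ext
      show max 0 (min 1 1) = 1
      norm_num
    have hF2c : Continuous (fun z : ℝ × ℝ =>
        f (H (Set.projIcc 0 1 zero_le_one z.1, Set.projIcc 0 1 zero_le_one z.2))) :=
      hf.comp (H.continuous.comp
        ((continuous_projIcc.comp continuous_fst).prodMk
          (continuous_projIcc.comp continuous_snd)))
    obtain ⟨G₀, hGc, hGe⟩ := aux_lift_convex ((convex_Icc (0:ℝ) 1).prod (convex_Icc (0:ℝ) 1))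
      (isCompact_Icc.prod isCompact_Icc) hF2c.continuousOn (fun z _ => h0 _)
    have hclc : Continuous (fun t : ℝ => max 0 (min 1 t)) :=
      continuous_const.max (continuous_const.min continuous_id)
    set G : ℝ × ℝ → ℂ := fun z => G₀ (max 0 (min 1 z.1), max 0 (min 1 z.2)) with hG
    have hGc' : Continuous G :=
      hGc.comp_continuous ((hclc.comp continuous_fst).prodMk (hclc.comp continuous_snd))
        (fun z => Set.mk_mem_prod (aux_clamp_mem _) (aux_clamp_mem _))
    have hGe' : ∀ z : ℝ × ℝ, Complex.exp (G z) =
        f (H (Set.projIcc 0 1 zero_le_one z.1, Set.projIcc 0 1 zero_le_one z.2)) := by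
      intro z
      have := hGe (max 0 (min 1 z.1), max 0 (min 1 z.2))
        (Set.mk_mem_prod (aux_clamp_mem _) (aux_clamp_mem _))
      rw [hG]
      refine this.trans ?_
      show f (H (Set.projIcc 0 1 zero_le_one (max 0 (min 1 z.1)), _)) = _
      rw [aux_clamp_proj, aux_clamp_proj]
    have hP' : ∀ t : ℝ, Complex.exp (G (0, t)) = Complex.exp (P t) := by
      intro t
      calc Complex.exp (G (0, t))
          = f (H (Set.projIcc 0 1 zero_le_one 0, Set.projIcc 0 1 zero_le_one t)) := hGe' (0, t)
        _ = f (p (Set.projIcc 0 1 zero_le_one t)) := by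
            rw [hpr0]
            exact congrArg f (H.apply_zero _)
        _ = f (p.extend t) := by rw [hproj]
        _ = Complex.exp (P t) := (hPe t).symm
    have hQ' : ∀ t : ℝ, Complex.exp (G (1, t)) = Complex.exp (Q t) := by
      intro t
      calc Complex.exp (G (1, t))
          = f (H (Set.projIcc 0 1 zero_le_one 1, Set.projIcc 0 1 zero_le_one t)) := hGe' (1, t)
        _ = f (q (Set.projIcc 0 1 zero_le_one t)) := by
            rw [hpr1]
            exact congrArg f (H.apply_one _)
        _ = f (q.extend t) := by rw [hproj]
        _ = Complex.exp (Q t) := (hQe t).symm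
    have hbotv : ∀ s : ℝ, Complex.exp (G (s, 0)) = f a := by
      intro s
      calc Complex.exp (G (s, 0))
          = f (H (Set.projIcc 0 1 zero_le_one s, Set.projIcc 0 1 zero_le_one 0)) := hGe' (s, 0)
        _ = f (p 0) := by
            rw [hpr0]
            exact congrArg f (H.eq_fst _ (Set.mem_insert _ _))
        _ = f a := by rw [Path.source]
    have htopv : ∀ s : ℝ, Complex.exp (G (s, 1)) = f b := by
      intro s
      calc Complex.exp (G (s, 1))
          = f (H (Set.projIcc 0 1 zero_le_one s, Set.projIcc 0 1 zero_le_one 1)) := hGe' (s, 1)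
        _ = f (p 1) := by
            rw [hpr1]
            exact congrArg f (H.eq_fst _ (Set.mem_insert_of_mem _ rfl))
        _ = f b := by rw [Path.target]
    have hbot : ∀ s s' : ℝ, G (s, 0) = G (s', 0) := by
      intro s s'
      exact hconst (fun s => G (s, 0)) (hGc'.comp (continuous_id.prodMk continuous_const))
        (fun t t' => by
          show Complex.exp (G (t, 0)) = Complex.exp (G (t', 0))
          rw [hbotv t, hbotv t']) s s'
    have htop : ∀ s s' : ℝ, G (s, 1) = G (s', 1) := by
      intro s s'
      exact hconst (fun s => G (s, 1)) (hGc'.comp (continuous_id.prodMk continuous_const))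
        (fun t t' => by
          show Complex.exp (G (t, 1)) = Complex.exp (G (t', 1))
          rw [htopv t, htopv t']) s s'
    have e1 : P 1 - P 0 = G (0, 1) - G (0, 0) :=
      hdiff P (fun t => G (0, t)) hPc
        (hGc'.comp (continuous_const.prodMk continuous_id)) (fun t => (hP' t).symm)
    have e2 : Q 1 - Q 0 = G (1, 1) - G (1, 0) :=
      hdiff Q (fun t => G (1, t)) hQc
        (hGc'.comp (continuous_const.prodMk continuous_id)) (fun t => (hQ' t).symm)
    rw [e1, e2, htop 0 1, hbot 0 1]
  -- construction of the global logarithm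
  have : PathConnectedSpace X := inferInstance
  obtain ⟨x₀⟩ : Nonempty X := PathConnectedSpace.nonempty
  set g : X → ℂ := fun x => Complex.log (f x₀) +
    (L x₀ x (PathConnectedSpace.somePath x₀ x) 1 - L x₀ x (PathConnectedSpace.somePath x₀ x) 0)
    with hg
  have hge : ∀ x, Complex.exp (g x) = f x := by
    intro x
    rw [hg]
    simp only
    rw [Complex.exp_add, Complex.exp_sub, hLe, hLe, Path.extend_one, Path.extend_zero,
      Complex.exp_log (h0 x₀), mul_comm, div_mul_cancel₀ _ (h0 x₀)]
  refine ⟨g, ?_, hge⟩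
  rw [continuous_iff_continuousAt]
  intro x
  have hV : f ⁻¹' (ball (f x) ‖f x‖) ∈ nhds x :=
    hf.continuousAt.preimage_mem_nhds (ball_mem_nhds (f x) (norm_pos_iff.mpr (h0 x)))
  obtain ⟨U, ⟨hU𝓝, hUpc⟩, hUV⟩ := (path_connected_basis x).mem_iff.mp hV
  have hxU : x ∈ U := mem_of_mem_nhds hU𝓝
  have hsmall : ∀ z ∈ U, ‖f z / f x - 1‖ < 1 := by
    intro z hz
    rw [div_sub_one (h0 x), norm_div, div_lt_one (norm_pos_iff.mpr (h0 x))]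
    have := hUV hz
    rw [Set.mem_preimage, mem_ball, dist_eq_norm] at this
    exact this
  have claim : ∀ y ∈ U, g y = g x + Complex.log (f y / f x) := by
    intro y hy
    have hjoin : JoinedIn U x y := hUpc.joinedIn x hxU y hy
    set σ : Path x y := hjoin.somePath with hσ
    have hσU : ∀ t : unitInterval, σ t ∈ U := hjoin.somePath_mem
    have hσextU : ∀ t : ℝ, σ.extend t ∈ U := fun t => by rw [hproj]; exact hσU _
    set γx := PathConnectedSpace.somePath x₀ x
    set Gx := L x₀ x γx with hGx
    set S : ℝ → ℂ := fun t => Gx 1 + Complex.log (f (σ.extend t) / f x) with hS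
    have hSc : Continuous S := by
      apply continuous_const.add
      apply Continuous.clog
      · exact (hf.comp σ.continuous_extend).div continuous_const (fun t => h0 x)
      · intro t
        apply Complex.ball_one_subset_slitPlane
        rw [mem_ball_iff_norm]
        exact hsmall _ (hσextU t)
    have hSe : ∀ t, Complex.exp (S t) = f (σ.extend t) := by
      intro t
      rw [hS]
      simp only
      rw [Complex.exp_add, hLe, Path.extend_one,
        Complex.exp_log (div_ne_zero (h0 _) (h0 x)), mul_comm, div_mul_cancel₀ _ (h0 x)]
    have hS0 : S 0 = Gx 1 := by
      rw [hS]
      simp only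
      rw [Path.extend_zero, div_self (h0 x), Complex.log_one, add_zero]
    set T : ℝ → ℂ := fun t => if t ≤ 1/2 then Gx (2*t) else S (2*t - 1) with hT
    have hTc : Continuous T := by
      apply Continuous.if_le
      · exact (hLc x₀ x γx).comp (continuous_const.mul continuous_id)
      · exact hSc.comp ((continuous_const.mul continuous_id).sub continuous_const)
      · exact continuous_id
      · exact continuous_const
      · intro t ht
        rw [ht]
        norm_num [hS0]
    have hTe : ∀ t, Complex.exp (T t) = f ((γx.trans σ).extend t) := by
      intro t
      rw [aux_trans_extend, hT]
      simp only
      split_ifs with h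
      · rw [hLe]
      · rw [hSe]
    have hhom : (PathConnectedSpace.somePath x₀ y).Homotopic (γx.trans σ) :=
      SimplyConnectedSpace.paths_homotopic _ _
    have hinc := hinv x₀ y _ _ hhom (L x₀ y (PathConnectedSpace.somePath x₀ y)) T
      (hLc _ _ _) hTc (hLe _ _ _) hTe
    have hT1 : T 1 = Gx 1 + Complex.log (f y / f x) := by
      rw [hT]
      simp only
      rw [if_neg (by norm_num)]
      rw [hS]
      simp only
      norm_num
    have hT0 : T 0 = Gx 0 := by
      rw [hT]
      simp only
      rw [if_pos (by norm_num)]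
      norm_num
    rw [hg]
    simp only
    rw [hinc, hT1, hT0]
    ring
  refine ContinuousAt.congr ?_ (Filter.eventuallyEq_of_mem hU𝓝 claim).symm
  apply continuousAt_const.add
  apply ContinuousAt.clog
  · exact hf.continuousAt.div continuousAt_const (h0 x)
  · rw [div_self (h0 x)]
    exact Complex.one_mem_slitPlane

private lemma aux_exists_sqrt {X : Type*} [TopologicalSpace X] [LocallyPathConnectedSpace X]
    [SimplyConnectedSpace X] {f : X → ℂ} (hf : Continuous f) (h0 : ∀ x, f x ≠ 0) :
    ∃ b : X → ℂ, Continuous b ∧ ∀ x, b x * b x = f x := by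
  obtain ⟨g, hgc, hge⟩ := aux_exists_exp_eq hf h0
  refine ⟨fun x => Complex.exp (g x / 2), (hgc.div_const 2).cexp, fun x => ?_⟩
  rw [← Complex.exp_add]
  rw [show g x / 2 + g x / 2 = g x by ring]
  exact hge x

private lemma aux_chol {X : Type*} [TopologicalSpace X] [LocallyPathConnectedSpace X]
    [SimplyConnectedSpace X] (n : ℕ) :
    ∀ (ψ : X → Matrix (Fin n) (Fin n) ℂ), Continuous ψ → (∀ s, (ψ s)ᵀ = ψ s) →
    (∀ s (k : ℕ), 1 ≤ k → ∀ hk : k ≤ n,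
      ((ψ s).submatrix (Fin.castLE hk) (Fin.castLE hk)).det ≠ 0) →
    ∃ B : X → Matrix (Fin n) (Fin n) ℂ, Continuous B ∧
      ∀ s, (∀ i j : Fin n, i < j → B s i j = 0) ∧ ψ s = B s * (B s)ᵀ := by
  induction n with
  | zero =>
    intro ψ _ _ _
    refine ⟨fun _ => 0, continuous_const, fun s => ⟨fun i => i.elim0, ?_⟩⟩
    ext i j
    exact i.elim0
  | succ n ih =>
    intro ψ hψ hsym hdet
    have hψsym : ∀ s (i j : Fin (n+1)), ψ s i j = ψ s j i := by
      intro s i j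
      have h := congrFun (congrFun (hsym s) j) i
      rwa [Matrix.transpose_apply] at h
    set A : X → Matrix (Fin n) (Fin n) ℂ :=
      fun s => (ψ s).submatrix Fin.castSucc Fin.castSucc with hA
    have hAc : Continuous A := hψ.matrix_submatrix _ _
    have hAsym : ∀ s, (A s)ᵀ = A s := by
      intro s
      rw [hA]
      simp only [Matrix.transpose_submatrix]
      rw [hsym]
    have hAdet : ∀ s (k : ℕ), 1 ≤ k → ∀ hk : k ≤ n,
        ((A s).submatrix (Fin.castLE hk) (Fin.castLE hk)).det ≠ 0 := by
      intro s k hk1 hk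
      have e : (A s).submatrix (Fin.castLE hk) (Fin.castLE hk) =
          (ψ s).submatrix (Fin.castLE (hk.trans (Nat.le_succ n)))
            (Fin.castLE (hk.trans (Nat.le_succ n))) := by
        ext i j
        rfl
      rw [e]
      exact hdet s k hk1 _
    obtain ⟨B₀, hB₀c, hB₀⟩ := ih A hAc hAsym hAdet
    have hB₀tri : ∀ s (i j : Fin n), i < j → B₀ s i j = 0 := fun s => (hB₀ s).1
    have hAeq : ∀ s, A s = B₀ s * (B₀ s)ᵀ := fun s => (hB₀ s).2
    have hAB : ∀ s (i' j' : Fin n),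
        ψ s i'.castSucc j'.castSucc = ∑ k, B₀ s i' k * B₀ s j' k := by
      intro s i' j'
      have h := congrFun (congrFun (hAeq s) i') j'
      rw [Matrix.mul_apply] at h
      simp only [Matrix.transpose_apply] at h
      exact h
    have hdetψ : ∀ s, (ψ s).det ≠ 0 := by
      intro s
      have h := hdet s (n+1) (by omega) (le_refl _)
      have e : (ψ s).submatrix (Fin.castLE (le_refl (n+1))) (Fin.castLE (le_refl (n+1))) =
          ψ s := by
        ext i j
        rfl
      rwa [e] at h
    have hdetA : ∀ s, (A s).det ≠ 0 := by
      intro s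
      rcases Nat.eq_zero_or_pos n with h | h
      · subst h
        rw [Matrix.det_isEmpty]
        exact one_ne_zero
      · have h2 := hdet s n h (Nat.le_succ n)
        have e : A s = (ψ s).submatrix (Fin.castLE (Nat.le_succ n))
            (Fin.castLE (Nat.le_succ n)) := by
          ext i j
          rfl
        rw [e]
        exact h2
    have hdetB₀ : ∀ s, (B₀ s).det ≠ 0 := by
      intro s h
      apply hdetA s
      rw [hAeq s, Matrix.det_mul, Matrix.det_transpose, h, mul_zero]
    set v : X → Fin n → ℂ := fun s i => ψ s i.castSucc (Fin.last n) with hv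
    have hvc : Continuous v := continuous_pi fun i => hψ.matrix_elem _ _
    set w : X → Fin n → ℂ := fun s => (B₀ s)⁻¹ *ᵥ v s with hw
    have hwc : Continuous w := by
      have e : w = fun s => ((B₀ s).det)⁻¹ • ((B₀ s).adjugate *ᵥ v s) := by
        funext s
        rw [hw]
        simp only
        rw [Matrix.inv_def, Ring.inverse_eq_inv', Matrix.smul_mulVec]
      rw [e]
      exact (hB₀c.matrix_det.inv₀ hdetB₀).smul (hB₀c.matrix_adjugate.matrix_mulVec hvc)
    have hBw : ∀ s, B₀ s *ᵥ w s = v s := by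
      intro s
      rw [hw]
      simp only
      rw [Matrix.mulVec_mulVec, Matrix.mul_nonsing_inv _ (isUnit_iff_ne_zero.mpr (hdetB₀ s)),
        Matrix.one_mulVec]
    have hBw' : ∀ s (i' : Fin n), ∑ k, B₀ s i' k * w s k = ψ s i'.castSucc (Fin.last n) := by
      intro s i'
      have h := congrFun (hBw s) i'
      simpa [Matrix.mulVec, dotProduct] using h
    set δ : X → ℂ := fun s => ψ s (Fin.last n) (Fin.last n) - w s ⬝ᵥ w s with hδ
    have hδc : Continuous δ :=
      (hψ.matrix_elem _ _).sub (hwc.dotProduct hwc)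
    -- build the matrix with given corner entry
    set mk : (Fin n → ℂ) → ℂ → Matrix (Fin n) (Fin n) ℂ → Matrix (Fin (n+1)) (Fin (n+1)) ℂ :=
      fun ww β M => fun i j =>
        Fin.lastCases (Fin.lastCases β (fun j' => ww j') j)
          (fun i' => Fin.lastCases 0 (fun j' => M i' j') j) i with hmk
    have hmk_cc : ∀ ww β M (i' j' : Fin n), mk ww β M i'.castSucc j'.castSucc = M i' j' := by
      intro ww β M i' j'
      rw [hmk]
      simp
    have hmk_cl : ∀ ww β M (i' : Fin n), mk ww β M i'.castSucc (Fin.last n) = 0 := by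
      intro ww β M i'
      rw [hmk]
      simp
    have hmk_lc : ∀ ww β M (j' : Fin n), mk ww β M (Fin.last n) j'.castSucc = ww j' := by
      intro ww β M j'
      rw [hmk]
      simp
    have hmk_ll : ∀ ww β M, mk ww β M (Fin.last n) (Fin.last n) = β := by
      intro ww β M
      rw [hmk]
      simp
    -- key products
    have key : ∀ s (β dd : ℂ), β * β = dd →
        ψ s (Fin.last n) (Fin.last n) = w s ⬝ᵥ w s + dd →
        ψ s = mk (w s) β (B₀ s) * (mk (w s) β (B₀ s))ᵀ := by
      intro s β dd hβ hcorner
      ext i j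
      rw [Matrix.mul_apply]
      simp only [Matrix.transpose_apply]
      induction i using Fin.lastCases with
      | last =>
        induction j using Fin.lastCases with
        | last =>
          rw [Fin.sum_univ_castSucc]
          simp only [hmk_lc, hmk_ll]
          rw [hcorner, hβ]
          simp [dotProduct]
        | cast j' =>
          rw [Fin.sum_univ_castSucc]
          simp only [hmk_lc, hmk_ll, hmk_cl, hmk_cc, mul_zero, add_zero]
          rw [hψsym s _ j'.castSucc, ← hBw' s j']
          exact Finset.sum_congr rfl fun k _ => mul_comm _ _
      | cast i' =>
        induction j using Fin.lastCases with
        | last =>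
          rw [Fin.sum_univ_castSucc]
          simp only [hmk_cc, hmk_cl, hmk_lc, hmk_ll, zero_mul, add_zero]
          exact (hBw' s i').symm
        | cast j' =>
          rw [Fin.sum_univ_castSucc]
          simp only [hmk_cc, hmk_cl, zero_mul, add_zero]
          exact hAB s i' j'
    -- nonvanishing of δ via determinant
    have hδne : ∀ s, δ s ≠ 0 := by
      intro s h
      apply hdetψ s
      set dvec : Fin (n+1) → ℂ := fun k => Fin.lastCases (δ s) (fun _ => (1:ℂ)) k with hdvec
      have hdv_l : dvec (Fin.last n) = δ s := by rw [hdvec]; simp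
      have hdv_c : ∀ k' : Fin n, dvec k'.castSucc = 1 := by
        intro k'; rw [hdvec]; simp
      have hfact : ψ s = mk (w s) 1 (B₀ s) *
          (Matrix.diagonal dvec * (mk (w s) 1 (B₀ s))ᵀ) := by
        ext i j
        rw [Matrix.mul_apply]
        have hd : ∀ k, (Matrix.diagonal dvec * (mk (w s) 1 (B₀ s))ᵀ) k j =
            dvec k * mk (w s) 1 (B₀ s) j k := by
          intro k
          rw [Matrix.diagonal_mul, Matrix.transpose_apply]
        simp only [hd]
        induction i using Fin.lastCases with
        | last =>
          induction j using Fin.lastCases with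
          | last =>
            rw [Fin.sum_univ_castSucc]
            simp only [hmk_lc, hmk_ll, hdv_l, hdv_c, one_mul, mul_one]
            rw [hδ]
            simp only [dotProduct]
            ring
          | cast j' =>
            rw [Fin.sum_univ_castSucc]
            simp only [hmk_lc, hmk_ll, hmk_cl, hmk_cc, hdv_l, hdv_c, one_mul, mul_zero,
              add_zero]
            rw [hψsym s _ j'.castSucc, ← hBw' s j']
            exact Finset.sum_congr rfl fun k _ => mul_comm _ _
        | cast i' =>
          induction j using Fin.lastCases with
          | last =>
            rw [Fin.sum_univ_castSucc]
            simp only [hmk_cc, hmk_cl, hmk_lc, hmk_ll, hdv_l, hdv_c, one_mul, mul_one,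
              zero_mul, add_zero]
            exact (hBw' s i').symm
          | cast j' =>
            rw [Fin.sum_univ_castSucc]
            simp only [hmk_cc, hmk_cl, hdv_l, hdv_c, one_mul, zero_mul, mul_zero, add_zero]
            exact hAB s i' j'
      rw [hfact, Matrix.det_mul, Matrix.det_mul, Matrix.det_diagonal, Fin.prod_univ_castSucc]
      simp only [hdv_l, hdv_c, Finset.prod_const_one, one_mul]
      rw [h]
      ring
    -- square root of δ
    obtain ⟨β, hβc, hβ⟩ := aux_exists_sqrt hδc hδne
    refine ⟨fun s => mk (w s) (β s) (B₀ s), ?_, fun s => ⟨?_, ?_⟩⟩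
    · apply continuous_matrix
      intro i j
      induction i using Fin.lastCases with
      | last =>
        induction j using Fin.lastCases with
        | last => simpa only [hmk_ll] using hβc
        | cast j' => simpa only [hmk_lc] using (show Continuous fun a => w a j' from (continuous_apply j').comp hwc)
      | cast i' =>
        induction j using Fin.lastCases with
        | last => simpa only [hmk_cl] using continuous_const
        | cast j' => simpa only [hmk_cc] using hB₀c.matrix_elem i' j'
    · intro i j hij
      show mk (w s) (β s) (B₀ s) i j = 0
      induction i using Fin.lastCases with
      | last =>
        exact absurd (hij.trans_le (Fin.le_last j)) (lt_irrefl _)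
      | cast i' =>
        induction j using Fin.lastCases with
        | last => exact hmk_cl _ _ _ i'
        | cast j' =>
          rw [hmk_cc]
          exact hB₀tri s i' j' (Fin.castSucc_lt_castSucc_iff.mp hij)
    · exact key s (β s) (δ s) (hβ s) (by rw [hδ]; ring)

/-- **Continuous Cholesky factorization over a simply connected base.** If `X` is
locally path-connected and simply connected and `φ : X → M_m(ℂ)` is a continuous
family of symmetric matrices all of whose leading principal minors are nonzero, then
there is a continuous family `B` of lower triangular matrices with
`φ s = B s * (B s)ᵀ` for all `s`. -/
theorem continuous_cholesky_simply_connected (m : ℕ) (hm : 1 ≤ m)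
    (X : Type*) [TopologicalSpace X] [LocallyPathConnectedSpace X]
    [SimplyConnectedSpace X]
    (φ : X → Matrix (Fin m) (Fin m) ℂ) (hφ : Continuous φ)
    (hsym : ∀ s : X, (φ s)ᵀ = φ s)
    (hdet : ∀ s : X, ∀ k : ℕ, 1 ≤ k → ∀ hk : k ≤ m,
      ((φ s).submatrix (Fin.castLE hk) (Fin.castLE hk)).det ≠ 0) :
    ∃ B : X → Matrix (Fin m) (Fin m) ℂ,
      Continuous B ∧
      ∀ s : X, (∀ i j : Fin m, i < j → B s i j = 0) ∧ φ s = B s * (B s)ᵀ := by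
  exact aux_chol m φ hφ hsym hdet
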